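/- Let d ≥ 1 and suppose d + 2 ≡ 0 (mod p) for an odd prime p. Then the set X = {(1/√2)e_1, …, (1/√2)e_d, (1/√2)x, (1/√2)y} ⊆ ℝ^d, where x = (α,…,α), y = (β,…,β), α = (1+√(d+1))/d, β = (1−√(d+1))/d, has d+2 points whose set of squared distances is {1, 1 + (d+2)/d}; in particular every squared distance lies in ℤ_(p) and is congruent to 1 modulo p. -/

import Mathlib

lemma dist_sq_eq (d : ℕ) (x y : EuclideanSpace ℝ (Fin d)) :
    dist x y ^ 2 = ∑ k, (x k - y k) ^ 2 := by
  rw [EuclideanSpace.dist_eq, Real.sq_sqrt (by positivity)]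
  simp [Real.dist_eq, sq_abs]

lemma sumA (d : ℕ) (i j : Fin d) (hij : i ≠ j) :
    dist (EuclideanSpace.single i (1:ℝ)) (EuclideanSpace.single j (1:ℝ)) ^ 2 = 2 := by
  rw [dist_sq_eq]
  have h : ∀ k : Fin d, ((EuclideanSpace.single i (1:ℝ)) k - (EuclideanSpace.single j (1:ℝ)) k) ^ 2
      = (if k = i then (1:ℝ) else 0) + (if k = j then 1 else 0) := by
    intro k
    simp only [EuclideanSpace.single_apply]
    split_ifs with h1 h2 h2
    · exact absurd (h1 ▸ h2 ▸ rfl : i = j) hij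
    all_goals ring
  rw [Finset.sum_congr rfl fun k _ => h k, Finset.sum_add_distrib]
  simp
  norm_num

lemma sumB (d : ℕ) (i : Fin d) (c : ℝ) :
    dist (EuclideanSpace.single i (1:ℝ)) (WithLp.toLp 2 (fun _ => c) : EuclideanSpace ℝ (Fin d)) ^ 2
      = 1 - 2*c + d * c^2 := by
  rw [dist_sq_eq]
  have h : ∀ k : Fin d, ((EuclideanSpace.single i (1:ℝ)) k - (WithLp.toLp 2 (fun _ => c) : EuclideanSpace ℝ (Fin d)) k) ^ 2
      = c^2 + (if k = i then 1 - 2*c else 0) := by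
    intro k
    simp only [EuclideanSpace.single_apply]
    split_ifs <;> ring
  rw [Finset.sum_congr rfl fun k _ => h k, Finset.sum_add_distrib]
  simp [Finset.sum_const, Finset.card_fin]
  ring

lemma sumC (d : ℕ) (a b : ℝ) :
    @dist (EuclideanSpace ℝ (Fin d)) _ (WithLp.toLp 2 (fun _ => a)) (WithLp.toLp 2 (fun _ => b)) ^ 2
      = d * (a - b)^2 := by
  rw [dist_sq_eq]
  simp [Finset.sum_const, Finset.card_fin]

lemma dist_smul_sq (d : ℕ) (x y : EuclideanSpace ℝ (Fin d)) :
    dist ((Real.sqrt 2)⁻¹ • x) ((Real.sqrt 2)⁻¹ • y) ^ 2 = dist x y ^ 2 / 2 := by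
  rw [dist_smul₀]
  have h2 : Real.sqrt 2 > 0 := Real.sqrt_pos.mpr (by norm_num)
  rw [Real.norm_eq_abs, abs_of_pos (by positivity), mul_pow, inv_pow,
    Real.sq_sqrt (by norm_num : (0:ℝ) ≤ 2)]
  ring

theorem tight_example_odd_prime (p d : ℕ) (hp : p.Prime) (hodd : Odd p) (hd : 1 ≤ d)
    (hdp : p ∣ (d + 2))
    (α β : ℝ) (hα : α = (1 + Real.sqrt (d + 1)) / d) (hβ : β = (1 - Real.sqrt (d + 1)) / d)
    (pts : Fin (d + 2) → EuclideanSpace ℝ (Fin d))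
    (hpts : ∀ i : Fin (d + 2), pts i =
      if h : (i : ℕ) < d then (Real.sqrt 2)⁻¹ • EuclideanSpace.single ⟨(i : ℕ), h⟩ (1 : ℝ)
      else if (i : ℕ) = d then (Real.sqrt 2)⁻¹ • (WithLp.toLp 2 (fun _ => α) : EuclideanSpace ℝ (Fin d))
      else (Real.sqrt 2)⁻¹ • (WithLp.toLp 2 (fun _ => β) : EuclideanSpace ℝ (Fin d))) :
    Function.Injective pts ∧
    (∀ i j : Fin (d + 2), i ≠ j →
      dist (pts i) (pts j) ^ 2 ∈ ({1, 1 + ((d : ℝ) + 2) / d} : Set ℝ)) ∧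
    (∀ q ∈ ({1, 1 + ((d : ℚ) + 2) / d} : Set ℚ),
      ∃ a b : ℤ, ¬ (p : ℤ) ∣ b ∧ q = (a : ℚ) / (b : ℚ) ∧ (p : ℤ) ∣ (a - b)) := by
  have hd0 : (d:ℝ) ≠ 0 := Nat.cast_ne_zero.mpr (by omega)
  have hs : Real.sqrt ((d:ℝ) + 1) ^ 2 = (d:ℝ) + 1 := Real.sq_sqrt (by positivity)
  have hαval : 1 - 2*α + d*α^2 = 2 := by
    rw [hα]; field_simp; linear_combination hs
  have hβval : 1 - 2*β + d*β^2 = 2 := by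
    rw [hβ]; field_simp; linear_combination hs
  have hαβ : (d:ℝ) * (α - β)^2 / 2 = 1 + ((d:ℝ)+2)/d := by
    rw [hα, hβ]; field_simp; linear_combination 4 * hs
  have key : ∀ i j : Fin (d + 2), i ≠ j →
      dist (pts i) (pts j) ^ 2 ∈ ({1, 1 + ((d : ℝ) + 2) / d} : Set ℝ) := by
    have main : ∀ i j : Fin (d + 2), i ≠ j → (i : ℕ) ≤ (j : ℕ) →
        dist (pts i) (pts j) ^ 2 ∈ ({1, 1 + ((d : ℝ) + 2) / d} : Set ℝ) := by
      intro i j hij hle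
      rcases (show (j : ℕ) < d ∨ (j : ℕ) = d ∨ (j : ℕ) = d + 1 from by omega) with hj | hj | hj
      · -- both are basis vectors
        have hi : (i : ℕ) < d := by omega
        have hne : (⟨(i:ℕ), hi⟩ : Fin d) ≠ ⟨(j:ℕ), hj⟩ := by
          intro h
          exact hij (Fin.ext (by simpa using congrArg Fin.val h))
        rw [hpts i, hpts j, dif_pos hi, dif_pos hj, dist_smul_sq, sumA d _ _ hne]
        norm_num
      · -- j is the α point
        rcases (show (i : ℕ) < d ∨ (i : ℕ) = d from by omega) with hi | hi
        · rw [hpts i, hpts j, dif_pos hi, dif_neg (by omega), if_pos hj,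
            dist_smul_sq, sumB, hαval]
          norm_num
        · exact absurd (Fin.ext (hi.trans hj.symm)) hij
      · -- j is the β point
        rcases (show (i : ℕ) < d ∨ (i : ℕ) = d ∨ (i : ℕ) = d + 1 from by omega) with hi | hi | hi
        · rw [hpts i, hpts j, dif_pos hi, dif_neg (by omega), if_neg (by omega),
            dist_smul_sq, sumB, hβval]
          norm_num
        · rw [hpts i, hpts j, dif_neg (by omega), if_pos hi, dif_neg (by omega),
            if_neg (by omega), dist_smul_sq, sumC, hαβ]
          right
          rfl
        · exact absurd (Fin.ext (hi.trans hj.symm)) hij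
    intro i j hij
    rcases le_total (i : ℕ) (j : ℕ) with h | h
    · exact main i j hij h
    · rw [dist_comm]
      exact main j i (Ne.symm hij) h
  have hpos : (0:ℝ) < 1 + ((d:ℝ)+2)/d := by
    have : (0:ℝ) < (d:ℝ) := by positivity
    positivity
  refine ⟨?_, key, ?_⟩
  · intro i j h
    by_contra hne
    have := key i j hne
    rw [h, dist_self] at this
    rcases this with h1 | h1
    · norm_num at h1
    · simp only [Set.mem_singleton_iff] at h1
      rw [← h1] at hpos
      norm_num at hpos
  · intro q hq
    have hpd : ¬ (p : ℤ) ∣ (d : ℤ) := by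
      intro h
      have h1 : p ∣ d := by exact_mod_cast h
      have h2 : p ∣ 2 := by
        have := Nat.dvd_sub hdp h1
        simpa using this
      have hp2 : p = 2 := (Nat.prime_dvd_prime_iff_eq hp Nat.prime_two).mp h2
      rw [hp2] at hodd
      exact (by norm_num : ¬ Odd 2) hodd
    rcases hq with hq | hq
    · exact ⟨1, 1, by
        constructor
        · intro h
          have := Int.le_of_dvd one_pos h
          have := hp.two_le
          omega
        constructor
        · simp [hq]
        · simp⟩
    · simp only [Set.mem_singleton_iff] at hq
      refine ⟨2*d+2, d, hpd, ?_, ?_⟩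
      · have hdq : (d:ℚ) ≠ 0 := Nat.cast_ne_zero.mpr (by omega)
        rw [hq]
        push_cast
        field_simp
        ring
      · have : (2*(d:ℤ)+2) - (d:ℤ) = ((d + 2 : ℕ) : ℤ) := by push_cast; ring
        rw [this]
        exact_mod_cast hdp
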